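/- Let x ∈ E(A) with σ = σ(x;A), and let r = σ^{−1/m} p^{−1/(p−1)} (r = ∞ if σ = 0). Then on the disk |z|_p < r each function F_k(·;A)x is differentiable, and the derivative relations hold: F_k'(z;A)x = F_{k−1}(z;A)x for 1 ≤ k ≤ m−1, and F_0'(z;A)x = F_{m−1}(z;A)(Ax). -/

import Mathlib

open Filter Topology

/-!
STATEMENT 9 (derivative relations for the Mittag-Leffler functions). `ℂ_[p]` is
axiomatized as a complete, algebraically closed, nonarchimedean nontrivially normed
field `K` with an isometric `ℚ_[p]`-algebra structure; the closed operator `A` with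
domain `D` is a submodule `D` with a total linear map `A` whose graph over `D` is
closed.  `F k x z = Σ_n z^{mn+k} Aⁿx/(mn+k)!`, and the disk "`‖z‖ < r` with
`r = σ^{-1/m} p^{-1/(p-1)}` (`r = ∞` if `σ = 0`)" is the predicate
`σ = 0 ∨ ‖z‖ < σ^{-1/m} * p^{-1/(p-1)}`.
-/

section Aux

/-- Norm bound for inverse factorials in `ℚ_[p]`. -/
theorem aux_padic_fact_inv_norm {p : ℕ} [Fact p.Prime] (j : ℕ) :
    ‖((j.factorial : ℚ_[p]))⁻¹‖ ≤ ((p : ℝ) ^ ((1:ℝ)/((p:ℝ)-1))) ^ j := by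
  have hp : (1:ℕ) < p := (Fact.out : p.Prime).one_lt
  have hp1 : (1:ℝ) < (p:ℝ) := by exact_mod_cast hp
  have hp0 : (0:ℝ) < (p:ℝ) := by linarith
  have hfac : ((j.factorial : ℚ_[p])) ≠ 0 := by
    exact_mod_cast Nat.cast_ne_zero.mpr j.factorial_ne_zero
  rw [norm_inv, Padic.norm_eq_zpow_neg_valuation hfac, Padic.valuation_natCast]
  set v : ℕ := padicValNat p (j.factorial) with hvdef
  have hv : (p - 1) * v ≤ j := by
    rw [hvdef, sub_one_mul_padicValNat_factorial]
    exact Nat.sub_le _ _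
  have h1 : ((p:ℝ) ^ (-(v:ℤ)))⁻¹ = (p:ℝ) ^ ((v:ℕ):ℝ) := by
    rw [zpow_neg, inv_inv, zpow_natCast, Real.rpow_natCast]
  rw [h1, ← Real.rpow_natCast ((p:ℝ) ^ ((1:ℝ)/((p:ℝ)-1))) j, ← Real.rpow_mul hp0.le]
  apply Real.rpow_le_rpow_left_iff hp1 |>.mpr
  rw [one_div, inv_mul_eq_div, le_div_iff₀ (by linarith : (0:ℝ) < (p:ℝ)-1)]
  have : ((p:ℝ) - 1) = ((p - 1 : ℕ) : ℝ) := by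
    push_cast [Nat.cast_sub hp.le]; ring
  rw [this, ← Nat.cast_mul, mul_comm]
  exact_mod_cast hv

/-- Geometric-type bound from the limsup of `n`-th roots. -/
theorem aux_growth_of_limsup {y : ℕ → ℝ} (hy : ∀ n, 0 ≤ y n)
    (hbd : ∃ b : ℝ, ∀ n, y n ^ (1/(n:ℝ)) ≤ b) {σ σ' : ℝ}
    (hσ : σ = Filter.limsup (fun n : ℕ => y n ^ (1/(n:ℝ))) atTop)
    (h1 : σ < σ') (h2 : 0 < σ') :
    ∃ C : ℝ, 0 < C ∧ ∀ n, y n ≤ C * σ' ^ n := by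
  obtain ⟨b, hb⟩ := hbd
  have hev : ∀ᶠ n : ℕ in atTop, y n ^ (1/(n:ℝ)) < σ' := by
    apply Filter.eventually_lt_of_limsup_lt
    · rw [← hσ]; exact h1
    · exact Filter.isBoundedUnder_of ⟨b, hb⟩
  obtain ⟨N, hN⟩ := hev.exists_forall_of_atTop
  set M := max N 1 with hM
  have hsum : 0 ≤ ∑ i ∈ Finset.range (M+1), y i / σ' ^ i :=
    Finset.sum_nonneg fun i _ => div_nonneg (hy i) (by positivity)
  have key : ∀ n, M ≤ n → y n ≤ σ' ^ n := by
    intro n hn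
    have hn1 : 1 ≤ n := le_trans (le_max_right _ _) hn
    have h := (hN n (le_trans (le_max_left _ _) hn)).le
    have := Real.rpow_le_rpow (Real.rpow_nonneg (hy n) _) h (Nat.cast_nonneg n)
    rwa [← Real.rpow_mul (hy n), one_div,
      inv_mul_cancel₀ (by positivity : (n:ℝ) ≠ 0),
      Real.rpow_one, Real.rpow_natCast] at this
  refine ⟨1 + ∑ i ∈ Finset.range (M+1), y i / σ' ^ i, by linarith, fun n => ?_⟩
  by_cases hn : M ≤ n
  · calc y n ≤ σ' ^ n := key n hn
      _ ≤ (1 + ∑ i ∈ Finset.range (M+1), y i / σ' ^ i) * σ' ^ n := by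
          nth_rewrite 1 [← one_mul (σ' ^ n)]
          have hpn : (0:ℝ) ≤ σ' ^ n := pow_nonneg h2.le n
          nlinarith
  · push_neg at hn
    have hmem : n ∈ Finset.range (M+1) := Finset.mem_range.mpr (by omega)
    have hsingle : y n / σ' ^ n ≤ ∑ i ∈ Finset.range (M+1), y i / σ' ^ i :=
      Finset.single_le_sum (fun i _ => div_nonneg (hy i) (by positivity)) hmem
    have hpn : (0:ℝ) < σ' ^ n := pow_pos h2 n
    calc y n = (y n / σ' ^ n) * σ' ^ n := by field_simp
      _ ≤ (1 + ∑ i ∈ Finset.range (M+1), y i / σ' ^ i) * σ' ^ n := by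
          apply mul_le_mul_of_nonneg_right _ hpn.le
          linarith

/-- Second-order Taylor identity for powers. -/
theorem aux_taylor2_identity {K : Type*} [CommRing K] (z w : K) (j : ℕ) :
    w^j - z^j - (j:K) * z^(j-1) * (w-z)
      = (w-z)^2 * ∑ i ∈ Finset.range j,
          (∑ l ∈ Finset.range i, w^l * z^(i-1-l)) * z^(j-1-i) := by
  have h2 : ∑ i ∈ Finset.range j, z^i * z^(j-1-i) = (j:K) * z^(j-1) := by
    rw [Finset.sum_congr rfl (fun i hi => ?_), Finset.sum_const, Finset.card_range,
      nsmul_eq_mul]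
    rw [← pow_add]
    congr 1
    have := Finset.mem_range.mp hi
    omega
  calc w^j - z^j - (j:K) * z^(j-1) * (w-z)
      = ((∑ i ∈ Finset.range j, w^i * z^(j-1-i)) - ∑ i ∈ Finset.range j, z^i * z^(j-1-i))
          * (w-z) := by
        rw [sub_mul, geom_sum₂_mul, h2]
    _ = (∑ i ∈ Finset.range j, (w^i - z^i) * z^(j-1-i)) * (w-z) := by
        rw [← Finset.sum_sub_distrib]
        congr 1
        exact Finset.sum_congr rfl fun i _ => (sub_mul _ _ _).symm
    _ = (∑ i ∈ Finset.range j, ((∑ l ∈ Finset.range i, w^l * z^(i-1-l)) * (w-z)) * z^(j-1-i))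
          * (w-z) := by
        congr 1
        exact Finset.sum_congr rfl fun i _ => by rw [geom_sum₂_mul]
    _ = (w-z)^2 * ∑ i ∈ Finset.range j,
          (∑ l ∈ Finset.range i, w^l * z^(i-1-l)) * z^(j-1-i) := by
        rw [Finset.sum_congr rfl (fun i _ => mul_right_comm _ _ _), ← Finset.sum_mul]
        ring

/-- Summability of the termwise-differentiated series. -/
theorem aux_sumg {K : Type*} [NontriviallyNormedField K] [IsUltrametricDist K]
    {B : Type*} [NormedAddCommGroup B] [NormedSpace K B] [CompleteSpace B]
    (a : ℕ → B) (t : ℝ) (ht : 0 < t) (u : ℕ → ℝ) (hu : Summable u)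
    (ha : ∀ j, t ^ j * ‖a j‖ ≤ u j)
    (z : K) (hz : ‖z‖ ≤ t) :
    Summable (fun j : ℕ => ((j : K) * z ^ (j - 1)) • a j) := by
  have hu0 : ∀ j, 0 ≤ u j := fun j => le_trans (by positivity) (ha j)
  apply Summable.of_norm_bounded (hu.div_const t)
  intro j
  rw [norm_smul, norm_mul, norm_pow]
  rcases j with - | i
  · simp only [Nat.cast_zero, norm_zero, zero_mul]
    exact div_nonneg (hu0 0) ht.le
  · have h1 : ‖((i+1 : ℕ) : K)‖ ≤ 1 := IsUltrametricDist.norm_natCast_le_one K _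
    have h2 : ‖z‖ ^ ((i+1) - 1) ≤ t ^ i := by
      simpa using pow_le_pow_left₀ (norm_nonneg z) hz i
    calc ‖((i+1 : ℕ) : K)‖ * ‖z‖ ^ ((i+1) - 1) * ‖a (i+1)‖
        ≤ 1 * t ^ i * ‖a (i+1)‖ := by gcongr <;> positivity
      _ = (t ^ (i+1) * ‖a (i+1)‖) / t := by
          rw [pow_succ]; field_simp
      _ ≤ u (i+1) / t := by gcongr; exact ha _

/-- Term-by-term differentiation of a power series with ultrametric coefficients. -/
theorem aux_key_hasDerivAt {K : Type*} [NontriviallyNormedField K] [IsUltrametricDist K]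
    {B : Type*} [NormedAddCommGroup B] [NormedSpace K B] [CompleteSpace B]
    [IsUltrametricDist B]
    (a : ℕ → B) (t D : ℝ) (ht : 0 < t) (u : ℕ → ℝ) (hu : Summable u)
    (huD : ∀ j, u j ≤ D) (ha : ∀ j, t ^ j * ‖a j‖ ≤ u j)
    (z : K) (hz : ‖z‖ < t) :
    HasDerivAt (fun w : K => ∑' j : ℕ, w ^ j • a j)
      (∑' j : ℕ, ((j : K) * z ^ (j - 1)) • a j) z := by
  have hu0 : ∀ j, 0 ≤ u j := fun j => le_trans (by positivity) (ha j)
  have hD0 : 0 ≤ D := le_trans (hu0 0) (huD 0)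
  have sumf : ∀ w : K, ‖w‖ ≤ t → Summable (fun j : ℕ => w ^ j • a j) := by
    intro w hw
    apply Summable.of_norm_bounded hu
    intro j
    rw [norm_smul, norm_pow]
    calc ‖w‖ ^ j * ‖a j‖ ≤ t ^ j * ‖a j‖ := by gcongr
      _ ≤ u j := ha j
  have sumg : Summable (fun j : ℕ => ((j : K) * z ^ (j - 1)) • a j) :=
    aux_sumg a t ht u hu ha z hz.le
  rw [hasDerivAt_iff_isLittleO]
  have hsmall : (fun w : K => (w - z)^2) =o[𝓝 z] fun w => w - z := by
    have h0 : (fun w : K => w - z) =o[𝓝 z] (fun _ => (1:K)) := by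
      rw [Asymptotics.isLittleO_one_iff]
      have : Filter.Tendsto (fun w : K => w - z) (𝓝 z) (𝓝 (z - z)) :=
        (continuous_id.sub continuous_const).tendsto z
      simpa using this
    have := h0.mul_isBigO (Asymptotics.isBigO_refl (fun w : K => w - z) (𝓝 z))
    simpa [pow_two] using this
  refine Asymptotics.IsBigO.trans_isLittleO ?_ hsmall
  rw [Asymptotics.isBigO_iff]
  refine ⟨D / t^2, ?_⟩
  have hball : Metric.ball (0:K) t ∈ 𝓝 z :=
    Metric.isOpen_ball.mem_nhds (mem_ball_zero_iff.mpr hz)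
  filter_upwards [hball] with w hw
  have hwt : ‖w‖ < t := mem_ball_zero_iff.mp hw
  have s1 := sumf w hwt.le
  have s2 := sumf z hz.le
  have s3 : Summable (fun j : ℕ => (w - z) • ((j : K) * z ^ (j - 1)) • a j) :=
    sumg.const_smul (w - z)
  have hrw : (∑' j : ℕ, w ^ j • a j) - (∑' j : ℕ, z ^ j • a j)
      - (w - z) • ∑' j : ℕ, ((j : K) * z ^ (j - 1)) • a j
      = ∑' j : ℕ, (w^j - z^j - (j:K) * z^(j-1) * (w-z)) • a j := by
    rw [← (sumg.hasSum.const_smul (w - z)).tsum_eq, ← Summable.tsum_sub s1 s2,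
      ← Summable.tsum_sub (s1.sub s2) s3]
    apply tsum_congr
    intro j
    rw [smul_smul, ← sub_smul, ← sub_smul]
    congr 1
    ring
  rw [hrw]
  have hbd : ∀ j : ℕ, ‖(w^j - z^j - (j:K) * z^(j-1) * (w-z)) • a j‖
      ≤ D / t^2 * ‖(w - z)^2‖ := by
    intro j
    match j with
    | 0 => simp; positivity
    | 1 => simp; positivity
    | (i+2) =>
      rw [aux_taylor2_identity, norm_smul, norm_mul]
      set j := i + 2
      set S := ∑ i' ∈ Finset.range j, (∑ l ∈ Finset.range i', w^l * z^(i'-1-l)) * z^(j-1-i')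
      have hS : ‖S‖ ≤ t ^ (j - 2) := by
        apply IsUltrametricDist.norm_sum_le_of_forall_le_of_nonneg (by positivity)
        intro i' hi'
        have hi'j : i' < j := Finset.mem_range.mp hi'
        rcases Nat.eq_zero_or_pos i' with h0 | h0
        · subst h0; simp; positivity
        · rw [norm_mul, norm_pow]
          have hinner : ‖∑ l ∈ Finset.range i', w^l * z^(i'-1-l)‖ ≤ t ^ (i' - 1) := by
            apply IsUltrametricDist.norm_sum_le_of_forall_le_of_nonneg (by positivity)
            intro l hl
            have hl' : l < i' := Finset.mem_range.mp hl
            rw [norm_mul, norm_pow, norm_pow]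
            calc ‖w‖^l * ‖z‖^(i'-1-l) ≤ t^l * t^(i'-1-l) := by
                  gcongr <;> first | exact norm_nonneg _ | exact hwt.le | exact hz.le
              _ = t ^ (i' - 1) := by rw [← pow_add]; congr 1; omega
          calc ‖∑ l ∈ Finset.range i', w^l * z^(i'-1-l)‖ * ‖z‖^(j-1-i')
              ≤ t ^ (i' - 1) * t ^ (j-1-i') := by
                gcongr <;> first | exact hinner | exact hz.le | positivity
            _ = t ^ (j - 2) := by rw [← pow_add]; congr 1; omega
      calc ‖(w-z)^2‖ * ‖S‖ * ‖a j‖ ≤ ‖(w-z)^2‖ * t^(j-2) * ‖a j‖ := by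
            gcongr
        _ = ‖(w-z)^2‖ * (t^j * ‖a j‖ / t^2) := by
            rw [show t^j = t^(j-2) * t^2 by rw [← pow_add]; congr 1]
            rw [mul_right_comm (t^(j-2)), mul_div_cancel_right₀ _ (by positivity)]
            ring
        _ ≤ ‖(w-z)^2‖ * (u j / t^2) := by gcongr; exact ha j
        _ ≤ D / t^2 * ‖(w-z)^2‖ := by
            rw [mul_comm]
            gcongr
            exact huD j
  exact IsUltrametricDist.norm_tsum_le_of_forall_le_of_nonneg (by positivity) hbd

end Aux

theorem mittag_leffler_derivative_relations
    {p : ℕ} [Fact p.Prime]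
    {K : Type*} [NontriviallyNormedField K] [CompleteSpace K] [IsAlgClosed K]
    [IsUltrametricDist K] [Algebra ℚ_[p] K]
    (hK : ∀ q : ℚ_[p], ‖algebraMap ℚ_[p] K q‖ = ‖q‖)
    {B : Type*} [NormedAddCommGroup B] [NormedSpace K B] [CompleteSpace B]
    [IsUltrametricDist B]
    (D : Submodule K B) (A : B →ₗ[K] B)
    (hA : IsClosed {q : B × B | q.1 ∈ D ∧ A q.1 = q.2})
    (m : ℕ) (hm : 1 ≤ m)
    (x : B)
    (hxdom : ∀ n : ℕ, (⇑A)^[n] x ∈ D)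
    (hxE : ∃ α > (0 : ℝ), ∃ C > (0 : ℝ), ∀ n : ℕ, ‖(⇑A)^[n] x‖ ≤ C * α ^ n)
    (σ : ℝ)
    (hσ : σ = Filter.limsup (fun n : ℕ => ‖(⇑A)^[n] x‖ ^ (1 / (n : ℝ))) atTop)
    (F : ℕ → B → K → B)
    (hF : ∀ (k : ℕ) (v : B) (z : K),
      F k v z = ∑' n : ℕ, ((m * n + k).factorial : K)⁻¹ • z ^ (m * n + k) • (⇑A)^[n] v) :
    ∀ z : K, (σ = 0 ∨ ‖z‖ < σ ^ (-(1 : ℝ) / (m : ℝ)) * (p : ℝ) ^ (-(1 : ℝ) / ((p : ℝ) - 1))) →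
      (∀ k : ℕ, 1 ≤ k → k ≤ m - 1 → HasDerivAt (F k x) (F (k - 1) x z) z) ∧
      HasDerivAt (F 0 x) (F (m - 1) (A x) z) z := by
  intro z₀ hdisk
  have hp : (1:ℕ) < p := (Fact.out : p.Prime).one_lt
  have hp0 : (0:ℝ) < (p:ℝ) := by exact_mod_cast Nat.lt_of_lt_of_le Nat.zero_lt_one hp.le
  have hKchar : CharZero K := charZero_of_injective_algebraMap (algebraMap ℚ_[p] K).injective
  set ρ : ℝ := (p : ℝ) ^ ((1:ℝ)/((p:ℝ)-1)) with hρdef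
  have hρ0 : 0 < ρ := Real.rpow_pos_of_pos hp0 _
  -- norm of inverse factorials in K
  have hfacK : ∀ j : ℕ, ‖((j.factorial : K))⁻¹‖ ≤ ρ ^ j := by
    intro j
    have h1 : ((j.factorial : K)) = algebraMap ℚ_[p] K ((j.factorial : ℚ_[p])) := by
      rw [map_natCast]
    rw [norm_inv, h1, hK, ← norm_inv]
    exact aux_padic_fact_inv_norm j
  -- scalar factorial identity
  have hfact : ∀ j : ℕ, 1 ≤ j →
      ((j:K)) * ((j.factorial : K))⁻¹ = (((j-1).factorial : K))⁻¹ := by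
    intro j hj
    obtain ⟨i, rfl⟩ : ∃ i, j = i + 1 := ⟨j - 1, by omega⟩
    have h1 : ((i+1 : ℕ) : K) ≠ 0 := Nat.cast_ne_zero.mpr (by omega)
    have h3 : (((i+1).factorial : K)) = ((i+1:ℕ):K) * (i.factorial : K) := by
      rw [Nat.factorial_succ]; push_cast; ring
    rw [Nat.add_sub_cancel, h3, mul_inv, ← mul_assoc, mul_inv_cancel₀ h1, one_mul]
  -- σ is nonnegative
  obtain ⟨α, hα0, C₀, hC₀0, hbd₀⟩ := hxE
  have hub : ∀ n : ℕ, ‖(⇑A)^[n] x‖ ^ (1/(n:ℝ)) ≤ max 1 (max C₀ 1 * α) := by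
    intro n
    rcases n with - | n
    · simp
    · have hn0 : (0:ℝ) < (n+1 : ℕ) := by positivity
      have hinv0 : (0:ℝ) ≤ 1/((n+1:ℕ):ℝ) := by positivity
      have h1 : ‖(⇑A)^[n+1] x‖ ^ (1/((n+1:ℕ):ℝ)) ≤ (C₀ * α ^ (n+1)) ^ (1/((n+1:ℕ):ℝ)) :=
        Real.rpow_le_rpow (norm_nonneg _) (hbd₀ (n+1)) hinv0
      have h2 : (C₀ * α ^ (n+1)) ^ (1/((n+1:ℕ):ℝ))
          = C₀ ^ (1/((n+1:ℕ):ℝ)) * (α ^ (n+1) : ℝ) ^ (1/((n+1:ℕ):ℝ)) :=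
        Real.mul_rpow hC₀0.le (by positivity)
      have h3 : ((α ^ (n+1) : ℝ)) ^ (1/((n+1:ℕ):ℝ)) = α := by
        rw [← Real.rpow_natCast α (n+1), ← Real.rpow_mul hα0.le]
        rw [mul_one_div, div_self (by positivity), Real.rpow_one]
      have h4 : C₀ ^ (1/((n+1:ℕ):ℝ)) ≤ max C₀ 1 := by
        calc C₀ ^ (1/((n+1:ℕ):ℝ)) ≤ (max C₀ 1) ^ (1/((n+1:ℕ):ℝ)) :=
              Real.rpow_le_rpow hC₀0.le (le_max_left _ _) hinv0
          _ ≤ (max C₀ 1) ^ (1:ℝ) := by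
              apply Real.rpow_le_rpow_of_exponent_le (le_max_right _ _)
              rw [div_le_one hn0]
              exact_mod_cast Nat.succ_le_succ (Nat.zero_le n)
          _ = max C₀ 1 := Real.rpow_one _
      calc ‖(⇑A)^[n+1] x‖ ^ (1/((n+1:ℕ):ℝ)) ≤ C₀ ^ (1/((n+1:ℕ):ℝ)) * α := by
            rw [h2, h3] at h1; exact h1
        _ ≤ max C₀ 1 * α := mul_le_mul_of_nonneg_right h4 hα0.le
        _ ≤ max 1 (max C₀ 1 * α) := le_max_right _ _
  have hσnn : 0 ≤ σ := by
    rw [hσ]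
    apply Filter.le_limsup_of_frequently_le
    · exact Filter.Eventually.frequently (Filter.Eventually.of_forall fun n =>
        Real.rpow_nonneg (norm_nonneg _) _)
    · exact Filter.isBoundedUnder_of ⟨max 1 (max C₀ 1 * α), hub⟩
  -- choose the working radius t and the growth rate σ'
  obtain ⟨t, σ', ht0, hz₀t, hσσ', hσ'0, hq1⟩ :
      ∃ t σ' : ℝ, 0 < t ∧ ‖z₀‖ < t ∧ σ < σ' ∧ 0 < σ' ∧ (ρ*t)^m * σ' < 1 := by
    rcases eq_or_lt_of_le hσnn with hσ0 | hσpos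
    · -- σ = 0
      set T := (ρ*(‖z₀‖+1))^m with hT
      have hT0 : 0 < T := by positivity
      refine ⟨‖z₀‖+1, (T * 2)⁻¹, by positivity, by linarith, ?_, by positivity, ?_⟩
      · rw [← hσ0]; positivity
      · have h5 : T * (T*2)⁻¹ = 2⁻¹ := by field_simp
        rw [h5]; norm_num
    · have hcase : ‖z₀‖ < σ ^ (-(1:ℝ)/(m:ℝ)) * (p:ℝ)^(-(1:ℝ)/((p:ℝ)-1)) := by
        rcases hdisk with h0 | h
        · exact absurd h0 (by linarith)
        · exact h
      have hρR : (p:ℝ)^(-(1:ℝ)/((p:ℝ)-1)) = ρ⁻¹ := by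
        rw [hρdef, neg_div, Real.rpow_neg hp0.le]
      set R := σ ^ (-(1:ℝ)/(m:ℝ)) * (p:ℝ)^(-(1:ℝ)/((p:ℝ)-1)) with hRdef
      have hR0 : 0 < R := by
        rw [hRdef, hρR]
        exact mul_pos (Real.rpow_pos_of_pos hσpos _) (inv_pos.mpr hρ0)
      set t := (‖z₀‖ + R)/2 with htdef
      have hz₀R : ‖z₀‖ < R := hcase
      have ht0 : 0 < t := by
        have := norm_nonneg z₀
        rw [htdef]; linarith
      have htR : t < R := by rw [htdef]; linarith
      have hz₀t : ‖z₀‖ < t := by rw [htdef]; linarith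
      have hkey : (ρ*t)^m < σ⁻¹ := by
        have h1 : ρ * t < σ^(-(1:ℝ)/(m:ℝ)) := by
          have h2 : t < σ^(-(1:ℝ)/(m:ℝ)) * ρ⁻¹ := by rw [← hρR]; exact htR
          calc ρ*t < ρ * (σ^(-(1:ℝ)/(m:ℝ)) * ρ⁻¹) := by gcongr
            _ = σ^(-(1:ℝ)/(m:ℝ)) := by field_simp
        have h2 : (ρ*t)^m < (σ^(-(1:ℝ)/(m:ℝ)))^m :=
          pow_lt_pow_left₀ h1 (by positivity) (by omega)
        have h3 : (σ^(-(1:ℝ)/(m:ℝ)))^m = σ⁻¹ := by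
          rw [← Real.rpow_natCast (σ^(-(1:ℝ)/(m:ℝ))) m, ← Real.rpow_mul hσnn]
          rw [neg_div, neg_mul, one_div, inv_mul_cancel₀
            (by exact_mod_cast (by omega : m ≠ 0) : (m:ℝ) ≠ 0)]
          exact Real.rpow_neg_one σ
        rw [← h3]; exact h2
      set T := (ρ*t)^m with hTdef
      have hT0 : 0 < T := by positivity
      have hq' : T * σ < 1 := by
        have := mul_lt_mul_of_pos_right hkey hσpos
        rwa [inv_mul_cancel₀ (ne_of_gt hσpos)] at this
      have h4 : σ < T⁻¹ := by
        have hTinv : 0 < T⁻¹ := inv_pos.mpr hT0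
        nlinarith [mul_inv_cancel₀ (ne_of_gt hT0)]
      refine ⟨t, (σ + T⁻¹)/2, ht0, hz₀t, by linarith, by positivity, ?_⟩
      have h6 : T * ((σ + T⁻¹)/2) = (T*σ + 1)/2 := by field_simp
      rw [h6]; linarith
  -- geometric growth bound
  obtain ⟨C, hC0, hC⟩ := aux_growth_of_limsup (y := fun n => ‖(⇑A)^[n] x‖)
    (fun n => norm_nonneg _) ⟨max 1 (max C₀ 1 * α), hub⟩ hσ hσσ' hσ'0
  set q : ℝ := (ρ*t)^m * σ' with hqdef
  have hq0 : 0 ≤ q := by positivity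
  -- the coefficient sequences
  set a : ℕ → ℕ → B := fun k j =>
    if j % m = k then ((j.factorial : K))⁻¹ • (⇑A)^[j/m] x else 0 with ha_def
  set u : ℕ → ℕ → ℝ := fun k j =>
    if j % m = k then C * (ρ*t)^k * q ^ (j/m) else 0 with hu_def
  have hinj : ∀ k, Function.Injective (fun n : ℕ => m*n+k) := by
    intro k n1 n2 h
    simp only [add_left_inj] at h
    exact Nat.eq_of_mul_eq_mul_left (by omega) h
  have hmod : ∀ k n, k < m → (m*n+k) % m = k ∧ (m*n+k)/m = n := by
    intro k n hk
    constructor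
    · rw [Nat.mul_add_mod]; exact Nat.mod_eq_of_lt hk
    · rw [Nat.mul_add_div (by omega)]
      simp [Nat.div_eq_of_lt hk]
  have hsupp : ∀ k j, a k j ≠ 0 → ∃ n, m*n+k = j := by
    intro k j hne
    by_cases hjk : j % m = k
    · refine ⟨j/m, ?_⟩
      rw [← hjk]
      exact Nat.div_add_mod j m
    · exact absurd (by simp [ha_def, hjk]) hne
  have hak : ∀ k n, k < m → a k (m*n+k) = (((m*n+k).factorial : K))⁻¹ • (⇑A)^[n] x := by
    intro k n hk
    simp only [ha_def, (hmod k n hk).1, (hmod k n hk).2, if_true]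
  have hFfun : ∀ k, k < m → F k x = fun w : K => ∑' j : ℕ, w ^ j • a k j := by
    intro k hk
    funext w
    rw [hF k x w]
    rw [← Function.Injective.tsum_eq (g := fun n : ℕ => m*n+k) (hinj k)
      (f := fun j => w ^ j • a k j) ?_]
    · apply tsum_congr
      intro n
      rw [hak k n hk, smul_comm]
    · intro j hj
      have haj : a k j ≠ 0 := by
        intro h0
        apply hj
        simp [h0]
      obtain ⟨n, hn⟩ := hsupp k j haj
      exact ⟨n, hn⟩
  have ha_bound : ∀ k, k < m → ∀ j, t ^ j * ‖a k j‖ ≤ u k j := by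
    intro k hk j
    by_cases hjk : j % m = k
    · have hj : j = m*(j/m)+k := by
        conv_lhs => rw [← Nat.div_add_mod j m]
        rw [hjk]
      simp only [ha_def, hu_def, if_pos hjk]
      rw [norm_smul]
      calc t^j * (‖((j.factorial:K))⁻¹‖ * ‖(⇑A)^[j/m] x‖)
          ≤ t^j * (ρ^j * (C * σ'^(j/m))) := by
            gcongr
            · exact hfacK j
            · exact hC (j/m)
        _ = C * (ρ*t)^k * q^(j/m) := by
            rw [hqdef, mul_pow ((ρ*t)^m) σ' (j/m)]
            nth_rewrite 1 [hj]; nth_rewrite 2 [hj]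
            rw [← pow_mul]
            ring
    · simp only [ha_def, hu_def, if_neg hjk, norm_zero, mul_zero, le_refl]
  have hu_sum : ∀ k, k < m → Summable (u k) := by
    intro k hk
    rw [← Function.Injective.summable_iff (hinj k) ?_]
    · have : (u k) ∘ (fun n : ℕ => m*n+k) = fun n => C * (ρ*t)^k * q^n := by
        funext n
        simp only [Function.comp_apply, hu_def, (hmod k n hk).1, (hmod k n hk).2, if_true]
      rw [this]
      exact (summable_geometric_of_lt_one hq0 hq1).mul_left _
    · intro j hj
      by_cases hjk : j % m = k
      · exfalso
        apply hj
        refine ⟨j/m, ?_⟩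
        simp only
        rw [← hjk]
        exact Nat.div_add_mod j m
      · simp [hu_def, hjk]
  have hud : ∀ k, k < m → ∀ j, u k j ≤ C * (ρ*t)^k := by
    intro k hk j
    by_cases hjk : j % m = k
    · simp only [hu_def, if_pos hjk]
      have h1 : q^(j/m) ≤ 1 := pow_le_one₀ hq0 hq1.le
      have h2 : (0:ℝ) ≤ C * (ρ*t)^k := by positivity
      nlinarith
    · simp only [hu_def, if_neg hjk]
      positivity
  -- the main differentiation statement
  have main : ∀ k, k < m →
      HasDerivAt (F k x) (∑' j : ℕ, ((j : K) * z₀ ^ (j - 1)) • a k j) z₀ := by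
    intro k hk
    rw [hFfun k hk]
    exact aux_key_hasDerivAt (a k) t (C * (ρ*t)^k) ht0 (u k) (hu_sum k hk)
      (hud k hk) (ha_bound k hk) z₀ hz₀t
  have hsuppg : ∀ k, Function.support (fun j : ℕ => ((j : K) * z₀ ^ (j - 1)) • a k j)
      ⊆ Set.range (fun n : ℕ => m*n+k) := by
    intro k j hj
    have haj : a k j ≠ 0 := by
      intro h0
      apply hj
      simp [h0]
    obtain ⟨n, hn⟩ := hsupp k j haj
    exact ⟨n, hn⟩
  constructor
  · -- case 1 ≤ k ≤ m-1
    intro k hk1 hk2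
    have hk : k < m := by omega
    have hgk : (∑' j : ℕ, ((j : K) * z₀ ^ (j - 1)) • a k j) = F (k-1) x z₀ := by
      rw [hF (k-1) x z₀,
        ← Function.Injective.tsum_eq (g := fun n : ℕ => m*n+k) (hinj k) (hsuppg k)]
      apply tsum_congr
      intro n
      rw [hak k n hk, smul_smul, smul_smul]
      congr 1
      have h1 : m*n+(k-1) = m*n+k-1 := by omega
      rw [h1, mul_right_comm, hfact (m*n+k) (by omega)]
    rw [← hgk]
    exact main k hk
  · -- case k = 0
    have hk : 0 < m := by omega
    have hg0 : (∑' j : ℕ, ((j : K) * z₀ ^ (j - 1)) • a 0 j) = F (m-1) (A x) z₀ := by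
      rw [hF (m-1) (A x) z₀,
        ← Function.Injective.tsum_eq (g := fun n : ℕ => m*n+0) (hinj 0) (hsuppg 0)]
      have hsum0 : Summable (fun n : ℕ =>
          ((↑(m*n+0) : K) * z₀ ^ (m*n+0-1)) • a 0 (m*n+0)) := by
        have hg : Summable (fun j : ℕ => ((j : K) * z₀ ^ (j - 1)) • a 0 j) :=
          aux_sumg (a 0) t ht0 (u 0) (hu_sum 0 hk) (ha_bound 0 hk) z₀ hz₀t.le
        exact hg.comp_injective (hinj 0)
      rw [Summable.tsum_eq_zero_add hsum0]
      have hzero : ((↑(m*0+0) : K) * z₀ ^ (m*0+0-1)) • a 0 (m*0+0) = 0 := by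
        simp
      rw [hzero, zero_add]
      apply tsum_congr
      intro n
      rw [hak 0 (n+1) hk, smul_smul, smul_smul]
      have hiter : (⇑A)^[n+1] x = (⇑A)^[n] (A x) := Function.iterate_succ_apply (⇑A) n x
      rw [hiter]
      congr 1
      have h2 : m*(n+1) = m*n+m := by ring
      have h1 : m*n+(m-1) = m*(n+1)+0-1 := by omega
      rw [h1, mul_right_comm, hfact (m*(n+1)+0) (by omega)]
    rw [← hg0]
    exact main 0 hk
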